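/- For u ∈ U: ⟨δ_u, δ_u⟩ < 0 if and only if at least two of the weights w_{1 u_1}, …, w_{m u_m} are greater than 1, and ⟨δ_u, δ_u⟩ > 0 if and only if at most one of these weights is greater than 1. In particular ⟨δ_u, δ_u⟩ is never 0. -/
import Mathlib


open Finset

/-- The space of rational vectors indexed by the vertices of the generalized subspace
quiver: the first component is the value at the sink `v₀`, the second gives the values
at the sources `v_{ij}`. -/
abbrev QVec (m : ℕ) (r : Fin m → ℕ) : Type := ℚ × ((i : Fin m) → Fin (r i) → ℚ)

/-- The extremal vector `δ_u` : value `1` at `v₀`, value `1/w_{i u_i}` at `v_{i u_i}`,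
and `0` at all other vertices. -/
def delta {m : ℕ} {r : Fin m → ℕ} (w : ∀ i, Fin (r i) → ℕ) (u : ∀ i, Fin (r i)) :
    QVec m r :=
  (1, fun i j => if j = u i then ((w i (u i) : ℚ))⁻¹ else 0)

/-- A vector is balanced if `Σ_j w_{ij} d_{ij} = d₀` for every cluster `i`. -/
def IsBalancedVec {m : ℕ} {r : Fin m → ℕ} (w : ∀ i, Fin (r i) → ℕ) (x : QVec m r) : Prop :=
  ∀ i, ∑ j, (w i j : ℚ) * x.2 i j = x.1

/-- The Euler bilinear form of the generalized subspace quiver: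
`⟨d, d'⟩ = Σ_v d_v d'_v − Σ_{arrows} d_{source} d'₀`. -/
def euler {m : ℕ} {r : Fin m → ℕ} (w : ∀ i, Fin (r i) → ℕ) (x y : QVec m r) : ℚ :=
  x.1 * y.1 + ∑ i, ∑ j, x.2 i j * y.2 i j - ∑ i, ∑ j, (w i j : ℚ) * x.2 i j * y.1

/-- `⟨δ_u, δ_u⟩ < 0` iff at least two of the weights `w_{i u_i}` exceed `1`;
`⟨δ_u, δ_u⟩ > 0` iff at most one of them exceeds `1`; and `⟨δ_u, δ_u⟩ ≠ 0`. -/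
theorem euler_delta_self {m : ℕ} {r : Fin m → ℕ}
    (w : ∀ i, Fin (r i) → ℕ) (hw : ∀ i j, 0 < w i j)
    (u : ∀ i, Fin (r i)) :
    (euler w (delta w u) (delta w u) < 0 ↔
      2 ≤ (univ.filter (fun i => 1 < w i (u i))).card) ∧
    (0 < euler w (delta w u) (delta w u) ↔
      (univ.filter (fun i => 1 < w i (u i))).card ≤ 1) ∧
    euler w (delta w u) (delta w u) ≠ 0 := by
  have hE : euler w (delta w u) (delta w u) = 1 + ∑ i, ((w i (u i) : ℚ)⁻¹)^2 - m := by
    have h1 : ∀ i : Fin m, ∑ j, (delta w u).2 i j * (delta w u).2 i j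
        = ((w i (u i) : ℚ)⁻¹)^2 := by
      intro i
      simp [delta, ite_and, sq, Finset.sum_ite_eq']
    have h2 : ∀ i : Fin m, ∑ j, (w i j : ℚ) * (delta w u).2 i j * (delta w u).1 = 1 := by
      intro i
      have hne : (w i (u i) : ℚ) ≠ 0 := by
        exact_mod_cast (hw i (u i)).ne'
      simp [delta, mul_ite, Finset.sum_ite_eq', mul_inv_cancel₀ hne]
    simp only [euler, h1, h2, Finset.sum_const, card_univ, Fintype.card_fin,
      nsmul_eq_mul, mul_one]
    show (delta w u).1 * (delta w u).1 + _ - _ = _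
    simp [delta]
  set F := univ.filter (fun i => 1 < w i (u i)) with hF
  set c := F.card with hc
  have hcard : c + (univ.filter (fun i => ¬ 1 < w i (u i))).card = m := by
    rw [hc, hF, Finset.card_filter_add_card_filter_not, card_univ,
      Fintype.card_fin]
  have hsplit : ∑ i, ((w i (u i) : ℚ)⁻¹)^2
      = ∑ i ∈ F, ((w i (u i) : ℚ)⁻¹)^2
        + ∑ i ∈ univ.filter (fun i => ¬ 1 < w i (u i)), ((w i (u i) : ℚ)⁻¹)^2 :=
    (Finset.sum_filter_add_sum_filter_not univ _ _).symm
  have hone : ∑ i ∈ univ.filter (fun i => ¬ 1 < w i (u i)), ((w i (u i) : ℚ)⁻¹)^2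
      = (m - c : ℚ) := by
    rw [Finset.sum_congr rfl (fun i hi => ?_), Finset.sum_const, nsmul_eq_mul, mul_one]
    · have : ((univ.filter (fun i => ¬ 1 < w i (u i))).card : ℚ) = (m : ℚ) - c := by
        have : (univ.filter (fun i => ¬ 1 < w i (u i))).card = m - c := by omega
        rw [this]
        have : c ≤ m := by omega
        push_cast [Nat.cast_sub this]
        ring
      exact this
    · simp only [Finset.mem_filter] at hi
      have h1 : w i (u i) = 1 := by have := hw i (u i); omega
      rw [h1]; norm_num
  have hEs : euler w (delta w u) (delta w u)
      = 1 - c + ∑ i ∈ F, ((w i (u i) : ℚ)⁻¹)^2 := by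
    rw [hE, hsplit, hone]; ring
  have key : (c ≤ 1 → 0 < euler w (delta w u) (delta w u))
      ∧ (2 ≤ c → euler w (delta w u) (delta w u) < 0) := by
    constructor
    · intro hle
      rcases Nat.le_one_iff_eq_zero_or_eq_one.mp hle with h0 | h1
      · have : F = ∅ := Finset.card_eq_zero.mp h0
        rw [hEs, this, h0]; simp
      · have hpos : 0 < ∑ i ∈ F, ((w i (u i) : ℚ)⁻¹)^2 := by
          apply Finset.sum_pos
          · intro i _
            have : (0:ℚ) < w i (u i) := by exact_mod_cast hw i (u i)
            positivity
          · exact Finset.card_pos.mp (by omega)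
        rw [hEs, h1]
        push_cast
        linarith
    · intro h2c
      have hbd : ∑ i ∈ F, ((w i (u i) : ℚ)⁻¹)^2 ≤ (c : ℚ) * (1/4) := by
        calc ∑ i ∈ F, ((w i (u i) : ℚ)⁻¹)^2 ≤ ∑ i ∈ F, (1/4 : ℚ) := by
              apply Finset.sum_le_sum
              intro i hi
              simp only [hF, Finset.mem_filter] at hi
              have h2 : (2:ℚ) ≤ w i (u i) := by exact_mod_cast hi.2
              have hinv : ((w i (u i) : ℚ))⁻¹ ≤ 1/2 := by
                rw [inv_le_comm₀ (by linarith) (by norm_num)]; linarith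
              have h0 : (0:ℚ) ≤ ((w i (u i) : ℚ))⁻¹ := by positivity
              nlinarith
          _ = (c : ℚ) * (1/4) := by rw [Finset.sum_const, nsmul_eq_mul]
      have hcQ : (2:ℚ) ≤ c := by exact_mod_cast h2c
      rw [hEs]
      linarith
  refine ⟨⟨fun h => ?_, fun h => ?_⟩, ⟨fun h => ?_, fun h => ?_⟩, ?_⟩
  · by_contra hcon
    have := key.1 (by omega)
    linarith
  · exact key.2 h
  · by_contra hcon
    have := key.2 (by omega)
    linarith
  · exact key.1 h
  · rcases Nat.lt_or_ge c 2 with h | h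
    · exact (key.1 (by omega)).ne'
    · exact (key.2 h).ne
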